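/- Let k be a prime. If F is a k-town family of vectors in (ℤ/kℤ)^n, then |F| ≤ k^{⌊n/2⌋}. -/

import Mathlib

open Module

/-- For prime `k`, a `k`-town family `F ⊆ (ℤ/kℤ)^n` (all pairwise, including self,
scalar products vanish) satisfies `|F| ≤ k^⌊n/2⌋`. -/
theorem stmt_9 {k n : ℕ} (hk : Nat.Prime k)
    (F : Finset (Fin n → ZMod k))
    (hF : ∀ f₁ ∈ F, ∀ f₂ ∈ F, ∑ r, f₁ r * f₂ r = 0) :
    F.card ≤ k ^ (n / 2) := by
  haveI : Fact k.Prime := ⟨hk⟩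
  set B : LinearMap.BilinForm (ZMod k) (Fin n → ZMod k) :=
    LinearMap.mk₂ (ZMod k) (fun x y => ∑ r, x r * y r)
    (by intro x x' y; simp [add_mul, Finset.sum_add_distrib])
    (by intro a x y; simp [Finset.mul_sum, mul_assoc])
    (by intro x y y'; simp [mul_add, Finset.sum_add_distrib])
    (by intro a x y; simp [Finset.mul_sum]; exact Finset.sum_congr rfl fun i _ => by ring)
    with hB
  have hBapp : ∀ x y : Fin n → ZMod k, B x y = ∑ r, x r * y r := fun x y => rfl
  have hrefl : B.IsRefl := by
    intro x y h
    rw [hBapp] at h ⊢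
    rw [← h]
    exact Finset.sum_congr rfl (fun r _ => mul_comm _ _)
  have hnd : B.Nondegenerate := by
    refine ⟨?_, ?_⟩
    all_goals
    intro x hx
    funext r
    have := hx (Pi.single r 1)
    rw [hBapp] at this
    simpa [Pi.single_apply, Finset.sum_ite_eq'] using this
  set W : Submodule (ZMod k) (Fin n → ZMod k) := Submodule.span (ZMod k) (F : Set _) with hW
  have hWsub : W ≤ B.orthogonal W := by
    rw [hW, Submodule.span_le]
    intro f hf
    simp only [SetLike.mem_coe, LinearMap.BilinForm.mem_orthogonal_iff]
    intro g hg
    have : Submodule.span (ZMod k) (F : Set _) ≤ LinearMap.ker (B.flip f) := by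
      rw [Submodule.span_le]
      intro g' hg'
      simp only [SetLike.mem_coe, LinearMap.mem_ker]
      exact hF g' hg' f hf
    exact this hg
  have hfin : finrank (ZMod k) W ≤ n / 2 := by
    have h1 : finrank (ZMod k) W ≤ finrank (ZMod k) (B.orthogonal W) :=
      Submodule.finrank_mono hWsub
    have h2 : finrank (ZMod k) (B.orthogonal W) =
        finrank (ZMod k) (Fin n → ZMod k) - finrank (ZMod k) W :=
      LinearMap.BilinForm.finrank_orthogonal hnd W
    have h3 : finrank (ZMod k) (Fin n → ZMod k) = n := by simp
    omega
  haveI : Fintype W := Fintype.ofFinite _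
  have hcard : F.card ≤ Fintype.card W := by
    have hsub : F ⊆ (W : Set (Fin n → ZMod k)).toFinset := by
      intro f hf
      simp only [Set.mem_toFinset, SetLike.mem_coe]
      exact Submodule.subset_span hf
    calc F.card ≤ (W : Set (Fin n → ZMod k)).toFinset.card := Finset.card_le_card hsub
      _ = Fintype.card W := Set.toFinset_card _
  have hcardW : Fintype.card W = k ^ finrank (ZMod k) W := by
    rw [card_eq_pow_finrank (K := ZMod k), ZMod.card]
  calc F.card ≤ k ^ finrank (ZMod k) W := by rw [← hcardW]; exact hcard
    _ ≤ k ^ (n / 2) := Nat.pow_le_pow_right hk.pos hfin
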